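/- With the scattering-algebra setup of the context, the following two vector identities hold in ℂ²: e = ρ·c − κ·E·d and f = κ̂·E⁻¹·c + ρ̂·d. (These are the relations expressing the columns of the eigenfunction G₂ in terms of the columns of G₃ via the functions ρ and κ.) -/

import Mathlib

/-- scattering algebra of the Fokas method for the FODNLS equation.
With `c, d` the columns of `G₃`, `e, f` the columns of `G₂`, built from the columns
`a, b` of `G₁` via the spectral functions `y, z, Y, Z` and their conjugate-symmetric
counterparts `yh, zh, Yh, Zh` (satisfying the determinant relations), and with
`ρ = y·Yh + z·Zh`, `κ = yh·Zh − zh·Yh`, `ρh = yh·Y + zh·Z`, `κh = y·Z − z·Y`, one has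
`e = ρ·c − κ·E·d` and `f = κh·E⁻¹·c + ρh·d`. -/
theorem stmt_4 (ζ E : ℂ) (hE : E ≠ 0) (a b : Fin 2 → ℂ)
    (y yh z zh Y Yh Z Zh : ℂ)
    (hdet1 : y * yh + z * zh = 1) (hdet2 : Y * Yh + Z * Zh = 1)
    (c d e f : Fin 2 → ℂ)
    (hc : c = yh • a - (zh * E) • b) (hd : d = (z * E⁻¹) • a + y • b)
    (he : e = Yh • a - (Zh * E) • b) (hf : f = (Z * E⁻¹) • a + Y • b)
    (ρ κ ρh κh : ℂ)
    (hρ : ρ = y * Yh + z * Zh) (hκ : κ = yh * Zh - zh * Yh)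
    (hρh : ρh = yh * Y + zh * Z) (hκh : κh = y * Z - z * Y) :
    e = ρ • c - (κ * E) • d ∧ f = (κh * E⁻¹) • c + ρh • d := by
  subst hc hd he hf hρ hκ hρh hκh
  constructor <;> funext i <;>
    simp only [Pi.sub_apply, Pi.add_apply, Pi.smul_apply, smul_eq_mul] <;>
    field_simp
  · linear_combination (Zh * E * b i - Yh * a i) * hdet1
  · linear_combination (-(Z * a i) - Y * E * b i) * hdet1
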